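/- If a joint distribution on X × Y is independent, i.e., p(x,y) = p(x)p(y) for all x, y, then the logical mutual information factors: m(x,y) = h(x)·h(y). -/

import Mathlib

open Finset

theorem stmt14 {X Y : Type*} [Fintype X] [Fintype Y] (p : X × Y → ℝ)
    (hpos : ∀ z, 0 ≤ p z) (hsum : ∑ z, p z = 1)
    (hind : ∀ x y, p (x, y) = (∑ y', p (x, y')) * (∑ x', p (x', y))) :
    ∑ z : X × Y, p z *
        ((1 - ∑ y, p (z.1, y)) + (1 - ∑ x, p (x, z.2)) - (1 - p z)) =
      (1 - ∑ x, (∑ y, p (x, y)) ^ 2) * (1 - ∑ y, (∑ x, p (x, y)) ^ 2) := by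
  set px : X → ℝ := fun x => ∑ y, p (x, y) with hpx
  set py : Y → ℝ := fun y => ∑ x, p (x, y) with hpy
  have h1 : ∑ z : X × Y, p z * px z.1 = ∑ x, (px x) ^ 2 := by
    rw [Fintype.sum_prod_type]
    simp [← Finset.sum_mul, sq]
    rfl
  have h2 : ∑ z : X × Y, p z * py z.2 = ∑ y, (py y) ^ 2 := by
    rw [Fintype.sum_prod_type_right]
    simp [← Finset.sum_mul, sq]
    rfl
  have h3 : ∑ z : X × Y, p z ^ 2 = (∑ x, (px x) ^ 2) * (∑ y, (py y) ^ 2) := by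
    rw [Fintype.sum_prod_type, Finset.sum_mul]
    refine Finset.sum_congr rfl fun x _ => ?_
    rw [Finset.mul_sum]
    refine Finset.sum_congr rfl fun y _ => ?_
    rw [hind x y]
    ring
  have hexp : ∀ z : X × Y, p z * ((1 - px z.1) + (1 - py z.2) - (1 - p z))
      = p z - p z * px z.1 - p z * py z.2 + p z ^ 2 := fun z => by ring
  calc ∑ z : X × Y, p z * ((1 - px z.1) + (1 - py z.2) - (1 - p z))
      = ∑ z : X × Y, (p z - p z * px z.1 - p z * py z.2 + p z ^ 2) := by
        exact Finset.sum_congr rfl fun z _ => hexp z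
    _ = (∑ z : X × Y, p z) - (∑ z : X × Y, p z * px z.1)
        - (∑ z : X × Y, p z * py z.2) + ∑ z : X × Y, p z ^ 2 := by
        rw [Finset.sum_add_distrib, Finset.sum_sub_distrib, Finset.sum_sub_distrib]
    _ = 1 - (∑ x, (px x) ^ 2) - (∑ y, (py y) ^ 2)
        + (∑ x, (px x) ^ 2) * (∑ y, (py y) ^ 2) := by rw [hsum, h1, h2, h3]
    _ = (1 - ∑ x, (px x) ^ 2) * (1 - ∑ y, (py y) ^ 2) := by ring
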